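/- With notation as in Macaulay's lemma for monoids: every element a of F can be rewritten to its R-normal form using rules from any Gröbner basis B; consequently, a Gröbner basis for M generates the congruence R (its symmetric, transitive, monoidal closure is R). -/

import Mathlib

/-- Setup as in Macaulay's lemma: `Φ : ℕⁿ → M` surjective with kernel
congruence `R`, `lt` a total monoidal well-order.  Let `B` be a Gröbner basis for `M`:
a finite set of pairs `(a, b)` with `Φ a = Φ b` and `b ≺ a`, whose initial terms generate
the ideal `in(R)` of `ℕⁿ`.  Then every element can be rewritten (by the reflexive
transitive closure of one-step rewriting with rules of `B`) to its `R`-normal form;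
consequently the smallest additive congruence containing `B` is `R` itself. -/
theorem groebner_basis_generates_congruence (n : ℕ) (M : Type*) [AddCommMonoid M]
    (Φ : (Fin n → ℕ) →+ M) (hsurj : Function.Surjective Φ)
    (lt : (Fin n → ℕ) → (Fin n → ℕ) → Prop)
    (hwo : IsWellOrder (Fin n → ℕ) lt)
    (hmon : ∀ a b c : Fin n → ℕ, lt a b → lt (a + c) (b + c))
    (B : Finset ((Fin n → ℕ) × (Fin n → ℕ)))
    (hB : ∀ p ∈ B, Φ p.1 = Φ p.2 ∧ lt p.2 p.1)
    -- Gröbner condition: `in(R) = in(B) + F`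
    (hGB : {x : Fin n → ℕ | ∃ a, lt a x ∧ Φ a = Φ x} =
      {x : Fin n → ℕ | ∃ p ∈ B, ∃ f, x = p.1 + f}) :
    (∀ a b : Fin n → ℕ, Φ b = Φ a → (¬∃ a', lt a' b ∧ Φ a' = Φ b) →
      Relation.ReflTransGen
        (fun x y : Fin n → ℕ => ∃ p ∈ B, ∃ d, x = p.1 + d ∧ y = p.2 + d) a b) ∧
    (∀ a b : Fin n → ℕ,
      addConGen (fun x y : Fin n → ℕ => (x, y) ∈ B) a b ↔ Φ a = Φ b) := by
  have wf : WellFounded lt := hwo.toIsWellFounded.wf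
  have part1 : ∀ a b : Fin n → ℕ, Φ b = Φ a → (¬∃ a', lt a' b ∧ Φ a' = Φ b) →
      Relation.ReflTransGen
        (fun x y : Fin n → ℕ => ∃ p ∈ B, ∃ d, x = p.1 + d ∧ y = p.2 + d) a b := by
    intro a
    induction a using wf.induction with
    | _ a ih =>
      intro b hb hnorm
      by_cases hab : a = b
      · subst hab; exact Relation.ReflTransGen.refl
      rcases (show lt a b ∨ a = b ∨ lt b a by
        by_cases h1 : lt a b
        · exact Or.inl h1
        by_cases h2 : lt b a
        · exact Or.inr (Or.inr h2)
        exact Or.inr (Or.inl (hwo.trichotomous a b h1 h2))) with h | h | h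
      · exact absurd ⟨a, h, hb.symm⟩ hnorm
      · exact absurd h hab
      · -- a is in in(R)
        have hmem : a ∈ {x : Fin n → ℕ | ∃ c, lt c x ∧ Φ c = Φ x} := ⟨b, h, hb⟩
        rw [hGB] at hmem
        obtain ⟨p, hp, f, hf⟩ := hmem
        obtain ⟨hΦp, hltp⟩ := hB p hp
        have hlt' : lt (p.2 + f) a := by rw [hf]; exact hmon _ _ _ hltp
        have hΦ' : Φ (p.2 + f) = Φ a := by
          rw [hf, map_add, map_add, hΦp]
        refine Relation.ReflTransGen.head ⟨p, hp, f, hf, rfl⟩ ?_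
        exact ih _ hlt' b (hb.trans hΦ'.symm) hnorm
  refine ⟨part1, fun a b => ⟨fun h => ?_, fun h => ?_⟩⟩
  · -- addConGen ≤ ker Φ
    have := (AddCon.addConGen_le (c := AddCon.ker Φ)).2
      (fun x y hxy => (AddCon.ker_rel Φ).2 (hB (x, y) hxy).1) h
    exact (AddCon.ker_rel Φ).1 this
  · -- find the normal form of the common class
    obtain ⟨m, hm, hmin⟩ := wf.has_min {x | Φ x = Φ a} ⟨a, rfl⟩
    have hnorm : ¬∃ a', lt a' m ∧ Φ a' = Φ m := by
      rintro ⟨a', h1, h2⟩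
      exact hmin a' (h2.trans hm) h1
    have step : ∀ x y : Fin n → ℕ,
        Relation.ReflTransGen
          (fun x y : Fin n → ℕ => ∃ p ∈ B, ∃ d, x = p.1 + d ∧ y = p.2 + d) x y →
        addConGen (fun x y : Fin n → ℕ => (x, y) ∈ B) x y := by
      intro x y hxy
      induction hxy with
      | refl => exact (addConGen _).refl _
      | tail _ hstep ih =>
        obtain ⟨p, hp, d, h1, h2⟩ := hstep
        refine (addConGen _).trans ih ?_
        rw [h1, h2]
        exact (addConGen _).add (AddConGen.Rel.of _ _ hp) ((addConGen _).refl d)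
    have ha : addConGen (fun x y : Fin n → ℕ => (x, y) ∈ B) a m :=
      step a m (part1 a m hm hnorm)
    have hb' : addConGen (fun x y : Fin n → ℕ => (x, y) ∈ B) b m :=
      step b m (part1 b m (hm.trans h) hnorm)
    exact (addConGen _).trans ha ((addConGen _).symm hb')
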